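/- In the example instance, the polytope Q is not integral: Q has an extreme point (namely P, twelve of whose coordinates equal 1/2) that is not all of whose coordinates are 0 or 1. -/

import Mathlib

open Finset

/-- A point of the LP relaxation: `CY t d h1 h2`, `B t g1 g2`, `DY t d h g`,
with times in `Fin (T+1)`, dike heights in `Fin n`, barrier heights in `Fin m`. -/
structure DikePoint (T n m : ℕ) (D : Type) where
  CY : Fin (T + 1) → D → Fin n → Fin n → ℝ
  B : Fin (T + 1) → Fin m → Fin m → ℝ
  DY : Fin (T + 1) → D → Fin n → Fin m → ℝ

/-- Membership in the polytope `Q`: box constraints, support only on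
nondecreasing height pairs, initial conditions, flow conservation, and the
linking constraints. -/
def memQ {T n m : ℕ} {D : Type} [Fintype D] [NeZero n] [NeZero m]
    (x : DikePoint T n m D) : Prop :=
  (∀ t d h1 h2, x.CY t d h1 h2 ∈ Set.Icc (0 : ℝ) 1) ∧
  (∀ t g1 g2, x.B t g1 g2 ∈ Set.Icc (0 : ℝ) 1) ∧
  (∀ t d h g, x.DY t d h g ∈ Set.Icc (0 : ℝ) 1) ∧
  (∀ t d h1 h2, ¬ h1 ≤ h2 → x.CY t d h1 h2 = 0) ∧
  (∀ t g1 g2, ¬ g1 ≤ g2 → x.B t g1 g2 = 0) ∧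
  (∀ d, x.CY 0 d 0 0 = 1) ∧
  (∀ d h1 h2, 0 < h2 → x.CY 0 d h1 h2 = 0) ∧
  (x.B 0 0 0 = 1) ∧
  (∀ g1 g2, 0 < g2 → x.B 0 g1 g2 = 0) ∧
  (∀ (t : Fin T) (d : D) (h : Fin n),
    ∑ h1 ∈ Iic h, x.CY t.castSucc d h1 h = ∑ h3 ∈ Ici h, x.CY t.succ d h h3) ∧
  (∀ t d (h : Fin n), ∑ h1 ∈ Iic h, x.CY t d h1 h = ∑ g : Fin m, x.DY t d h g) ∧
  (∀ (t : Fin T) (g : Fin m),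
    ∑ g1 ∈ Iic g, x.B t.castSucc g1 g = ∑ g3 ∈ Ici g, x.B t.succ g g3) ∧
  (∀ t (d : D) (g : Fin m), ∑ g1 ∈ Iic g, x.B t g1 g = ∑ h : Fin n, x.DY t d h g)

/-- A point is integral if every coordinate is `0` or `1`. -/
def isIntegral {T n m : ℕ} {D : Type} (x : DikePoint T n m D) : Prop :=
  (∀ t d h1 h2, x.CY t d h1 h2 = 0 ∨ x.CY t d h1 h2 = 1) ∧
  (∀ t g1 g2, x.B t g1 g2 = 0 ∨ x.B t g1 g2 = 1) ∧
  (∀ t d h g, x.DY t d h g = 0 ∨ x.DY t d h g = 1)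

/-- The linear objective function of the LP relaxation. -/
def obj {T n m : ℕ} {D : Type} [Fintype D]
    (Dcost : Fin (T + 1) → D → Fin n → Fin n → ℝ)
    (Dexp : Fin (T + 1) → D → Fin n → Fin m → ℝ)
    (Bcost : Fin (T + 1) → Fin m → Fin m → ℝ)
    (Bexp : Fin (T + 1) → Fin m → ℝ)
    (x : DikePoint T n m D) : ℝ :=
  (∑ t, ∑ d, ∑ h2, ∑ h1 ∈ Iic h2, Dcost t d h1 h2 * x.CY t d h1 h2) +
  (∑ t, ∑ d, ∑ h, ∑ g, Dexp t d h g * x.DY t d h g) +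
  (∑ t, ∑ g2, ∑ g1 ∈ Iic g2, (Bcost t g1 g2 + Bexp t g2) * x.B t g1 g2)

/-- Condition (i). -/
def condI {T n m : ℕ} {D : Type}
    (Dexp : Fin (T + 1) → D → Fin n → Fin m → ℝ) : Prop :=
  ∀ (t : Fin (T + 1)) (d : D) (h h' : Fin n) (g g' : Fin m), h ≤ h' → g ≤ g' →
    Dexp t d h g + Dexp t d h' g' ≤ Dexp t d h' g + Dexp t d h g'

/-- Condition (ii). -/
def condII {T m : ℕ}
    (Bcost : Fin (T + 1) → Fin m → Fin m → ℝ) : Prop :=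
  ∀ (t : Fin (T + 1)) (g1 g1' g2 g2' : Fin m), g1 ≤ g1' → g1' ≤ g2 → g2 ≤ g2' →
    Bcost t g1 g2 + Bcost t g1' g2' ≤ Bcost t g1 g2' + Bcost t g1' g2

/-- Condition (iii). -/
def condIII {T n : ℕ} {D : Type}
    (Dcost : Fin (T + 1) → D → Fin n → Fin n → ℝ) : Prop :=
  ∀ (t : Fin (T + 1)) (d : D) (h1 h1' h2 h2' : Fin n), h1 ≤ h1' → h1' ≤ h2 → h2 ≤ h2' →
    Dcost t d h1 h2 + Dcost t d h1' h2' ≤ Dcost t d h1 h2' + Dcost t d h1' h2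

/-- A point `x` is an extreme point of the polytope `Q` if `x ∈ Q` and whenever
`y, z ∈ Q` satisfy `x = (y + z) / 2` (coordinatewise), then `y = z`. -/
def isExtremePoint {T n m : ℕ} {D : Type} [Fintype D] [NeZero n] [NeZero m]
    (x : DikePoint T n m D) : Prop :=
  memQ x ∧
    ∀ y z : DikePoint T n m D, memQ y → memQ z →
      ((∀ t d h1 h2, x.CY t d h1 h2 = (y.CY t d h1 h2 + z.CY t d h1 h2) / 2) ∧
       (∀ t g1 g2, x.B t g1 g2 = (y.B t g1 g2 + z.B t g1 g2) / 2) ∧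
       (∀ t d h g, x.DY t d h g = (y.DY t d h g + z.DY t d h g) / 2)) →
      y = z

-- auxiliary

noncomputable def Pcy : Fin 3 → Fin 2 → Fin 2 → ℝ := fun t h1 h2 =>
  if t.val = 0 ∧ h1.val = 0 ∧ h2.val = 0 then 1
  else if (t.val = 1 ∧ h1.val = 0) ∨ (t.val = 2 ∧ h1.val = h2.val) then 1/2 else 0

noncomputable def Pdy : Fin 3 → Fin 2 → Fin 2 → ℝ := fun t h g =>
  if t.val = 0 ∧ h.val = 0 ∧ g.val = 0 then 1
  else if (t.val = 1 ∧ h.val ≠ g.val) ∨ (t.val = 2 ∧ h.val = g.val) then 1/2 else 0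

noncomputable def Ppt : DikePoint 2 2 2 Unit where
  CY := fun t _ h1 h2 => Pcy t h1 h2
  B := Pcy
  DY := fun t _ h g => Pdy t h g

lemma iic0 : Iic (0 : Fin 2) = {0} := by decide
lemma iic1 : Iic (1 : Fin 2) = Finset.univ := by decide
lemma ici0 : Ici (0 : Fin 2) = Finset.univ := by decide
lemma ici1 : Ici (1 : Fin 2) = {1} := by decide
lemma cs0 : (Fin.castSucc (0 : Fin 2)) = (0 : Fin 3) := rfl
lemma cs1 : (Fin.castSucc (1 : Fin 2)) = (1 : Fin 3) := rfl
lemma su0 : (Fin.succ (0 : Fin 2)) = (1 : Fin 3) := rfl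
lemma su1 : (Fin.succ (1 : Fin 2)) = (2 : Fin 3) := rfl
lemma fin2cases : ∀ h : Fin 2, h = 0 ∨ h = 1 := by decide
lemma fin3cases : ∀ t : Fin 3, t = 0 ∨ t = 1 ∨ t = 2 := by decide
lemma two_ne_zero3 : ¬ ((2 : Fin 3) = 0) := by decide

lemma DikePoint.ext' {T n m : ℕ} {D : Type} {x y : DikePoint T n m D}
    (h1 : x.CY = y.CY) (h2 : x.B = y.B) (h3 : x.DY = y.DY) : x = y := by
  cases x; cases y; dsimp only at h1 h2 h3; subst h1; subst h2; subst h3; rfl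

set_option maxHeartbeats 2000000 in
lemma PmemQ : memQ Ppt := by
  refine ⟨?_, ?_, ?_, ?_, ?_, ?_, ?_, ?_, ?_, ?_, ?_, ?_, ?_⟩
  · intro t d h1 h2
    rcases fin3cases t with rfl|rfl|rfl <;> rcases fin2cases h1 with rfl|rfl <;>
      rcases fin2cases h2 with rfl|rfl <;> norm_num [Ppt, Pcy, Set.mem_Icc, two_ne_zero3]
  · intro t g1 g2
    rcases fin3cases t with rfl|rfl|rfl <;> rcases fin2cases g1 with rfl|rfl <;>
      rcases fin2cases g2 with rfl|rfl <;> norm_num [Ppt, Pcy, Set.mem_Icc]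
  · intro t d h g
    rcases fin3cases t with rfl|rfl|rfl <;> rcases fin2cases h with rfl|rfl <;>
      rcases fin2cases g with rfl|rfl <;> norm_num [Ppt, Pdy, Set.mem_Icc, two_ne_zero3]
  · intro t d h1 h2 h
    rcases fin3cases t with rfl|rfl|rfl <;> rcases fin2cases h1 with rfl|rfl <;>
      rcases fin2cases h2 with rfl|rfl <;>
      first
        | exact absurd (by decide) h
        | norm_num [Ppt, Pcy]
  · intro t g1 g2 h
    rcases fin3cases t with rfl|rfl|rfl <;> rcases fin2cases g1 with rfl|rfl <;>
      rcases fin2cases g2 with rfl|rfl <;>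
      first
        | exact absurd (by decide) h
        | norm_num [Ppt, Pcy]
  · intro d; norm_num [Ppt, Pcy]
  · intro d h1 h2 hp
    rcases fin2cases h1 with rfl|rfl <;> rcases fin2cases h2 with rfl|rfl <;>
      first
        | exact absurd hp (by decide)
        | norm_num [Ppt, Pcy]
  · norm_num [Ppt, Pcy]
  · intro g1 g2 hp
    rcases fin2cases g1 with rfl|rfl <;> rcases fin2cases g2 with rfl|rfl <;>
      first
        | exact absurd hp (by decide)
        | norm_num [Ppt, Pcy]
  · intro t d h
    rcases fin2cases t with rfl|rfl <;> rcases fin2cases h with rfl|rfl <;>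
      simp only [cs0, cs1, su0, su1, iic0, iic1, ici0, ici1, Finset.sum_singleton,
        Fin.sum_univ_two] <;> norm_num [Ppt, Pcy, two_ne_zero3]
  · intro t d h
    rcases fin3cases t with rfl|rfl|rfl <;> rcases fin2cases h with rfl|rfl <;>
      simp only [iic0, iic1, Finset.sum_singleton, Fin.sum_univ_two] <;>
      norm_num [Ppt, Pcy, Pdy, two_ne_zero3]
  · intro t g
    rcases fin2cases t with rfl|rfl <;> rcases fin2cases g with rfl|rfl <;>
      simp only [cs0, cs1, su0, su1, iic0, iic1, ici0, ici1, Finset.sum_singleton,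
        Fin.sum_univ_two] <;> norm_num [Ppt, Pcy]
  · intro t d g
    rcases fin3cases t with rfl|rfl|rfl <;> rcases fin2cases g with rfl|rfl <;>
      simp only [iic0, iic1, Finset.sum_singleton, Fin.sum_univ_two] <;>
      norm_num [Ppt, Pcy, Pdy, two_ne_zero3]

set_option maxHeartbeats 2000000 in
lemma Punique (y : DikePoint 2 2 2 Unit) (hy : memQ y)
    (hzC : ∀ t h1 h2, Pcy t h1 h2 = 0 → y.CY t () h1 h2 = 0)
    (hzB : ∀ t g1 g2, Pcy t g1 g2 = 0 → y.B t g1 g2 = 0)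
    (hzD : ∀ t h g, Pdy t h g = 0 → y.DY t () h g = 0)
    (h1C : y.CY 0 () 0 0 = 1) (h1B : y.B 0 0 0 = 1) (h1D : y.DY 0 () 0 0 = 1) :
    y = Ppt := by
  obtain ⟨-, -, -, -, -, -, -, -, -, fCY, lCY, fB, lB⟩ := hy
  -- zero coordinates
  have zC001 : y.CY 0 () 0 1 = 0 := hzC _ _ _ (by norm_num [Pcy])
  have zC010 : y.CY 0 () 1 0 = 0 := hzC _ _ _ (by norm_num [Pcy])
  have zC011 : y.CY 0 () 1 1 = 0 := hzC _ _ _ (by norm_num [Pcy])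
  have zC110 : y.CY 1 () 1 0 = 0 := hzC _ _ _ (by norm_num [Pcy])
  have zC111 : y.CY 1 () 1 1 = 0 := hzC _ _ _ (by norm_num [Pcy])
  have zC201 : y.CY 2 () 0 1 = 0 := hzC _ _ _ (by norm_num [Pcy])
  have zC210 : y.CY 2 () 1 0 = 0 := hzC _ _ _ (by norm_num [Pcy])
  have zB001 : y.B 0 0 1 = 0 := hzB _ _ _ (by norm_num [Pcy])
  have zB010 : y.B 0 1 0 = 0 := hzB _ _ _ (by norm_num [Pcy])
  have zB011 : y.B 0 1 1 = 0 := hzB _ _ _ (by norm_num [Pcy])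
  have zB110 : y.B 1 1 0 = 0 := hzB _ _ _ (by norm_num [Pcy])
  have zB111 : y.B 1 1 1 = 0 := hzB _ _ _ (by norm_num [Pcy])
  have zB201 : y.B 2 0 1 = 0 := hzB _ _ _ (by norm_num [Pcy])
  have zB210 : y.B 2 1 0 = 0 := hzB _ _ _ (by norm_num [Pcy])
  have zD001 : y.DY 0 () 0 1 = 0 := hzD _ _ _ (by norm_num [Pdy])
  have zD010 : y.DY 0 () 1 0 = 0 := hzD _ _ _ (by norm_num [Pdy])
  have zD011 : y.DY 0 () 1 1 = 0 := hzD _ _ _ (by norm_num [Pdy])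
  have zD100 : y.DY 1 () 0 0 = 0 := hzD _ _ _ (by norm_num [Pdy])
  have zD111 : y.DY 1 () 1 1 = 0 := hzD _ _ _ (by norm_num [Pdy])
  have zD201 : y.DY 2 () 0 1 = 0 := hzD _ _ _ (by norm_num [Pdy])
  have zD210 : y.DY 2 () 1 0 = 0 := hzD _ _ _ (by norm_num [Pdy])
  -- equations
  have E1 := fCY 0 () 0
  have E2 := fCY 1 () 0
  have E3 := fCY 1 () 1
  have E4 := lCY 1 () 0
  have E5 := lCY 1 () 1
  have E6 := lCY 2 () 0
  have E7 := lCY 2 () 1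
  have E8 := fB 0 0
  have E9 := fB 1 0
  have E10 := fB 1 1
  have E11 := lB 1 () 0
  have E12 := lB 1 () 1
  have E13 := lB 2 () 0
  have E14 := lB 2 () 1
  simp only [cs0, cs1, su0, su1, iic0, iic1, ici0, ici1, Finset.sum_singleton,
    Fin.sum_univ_two] at E1 E2 E3 E4 E5 E6 E7 E8 E9 E10 E11 E12 E13 E14
  -- fractional coordinates
  have vC100 : y.CY 1 () 0 0 = 1/2 := by linarith
  have vC101 : y.CY 1 () 0 1 = 1/2 := by linarith
  have vC200 : y.CY 2 () 0 0 = 1/2 := by linarith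
  have vC211 : y.CY 2 () 1 1 = 1/2 := by linarith
  have vB100 : y.B 1 0 0 = 1/2 := by linarith
  have vB101 : y.B 1 0 1 = 1/2 := by linarith
  have vB200 : y.B 2 0 0 = 1/2 := by linarith
  have vB211 : y.B 2 1 1 = 1/2 := by linarith
  have vD101 : y.DY 1 () 0 1 = 1/2 := by linarith
  have vD110 : y.DY 1 () 1 0 = 1/2 := by linarith
  have vD200 : y.DY 2 () 0 0 = 1/2 := by linarith
  have vD211 : y.DY 2 () 1 1 = 1/2 := by linarith
  refine DikePoint.ext' ?_ ?_ ?_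
  · funext t d h1 h2
    cases d
    rcases fin3cases t with rfl|rfl|rfl <;> rcases fin2cases h1 with rfl|rfl <;>
      rcases fin2cases h2 with rfl|rfl <;> norm_num [Ppt, Pcy, two_ne_zero3] <;> linarith
  · funext t g1 g2
    rcases fin3cases t with rfl|rfl|rfl <;> rcases fin2cases g1 with rfl|rfl <;>
      rcases fin2cases g2 with rfl|rfl <;> norm_num [Ppt, Pcy] <;> linarith
  · funext t d h g
    cases d
    rcases fin3cases t with rfl|rfl|rfl <;> rcases fin2cases h with rfl|rfl <;>
      rcases fin2cases g with rfl|rfl <;> norm_num [Ppt, Pdy, two_ne_zero3] <;> linarith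

set_option maxHeartbeats 2000000 in
/-- in the example instance (`T = 2`, one dike segment, two dike
heights, two barrier heights) the polytope `Q` is not integral: it has an
extreme point that is not integral. -/
theorem statement_2 :
    ∃ x : DikePoint 2 2 2 Unit, isExtremePoint x ∧ ¬ isIntegral x := by
  refine ⟨Ppt, ⟨PmemQ, ?_⟩, ?_⟩
  · rintro y z hy hz ⟨aC, aB, aD⟩
    have hyC := hy.1; have hzC := hz.1
    have hyB := hy.2.1; have hzB := hz.2.1
    have hyD := hy.2.2.1; have hzD := hz.2.2.1
    have pinCy : ∀ t h1 h2, Pcy t h1 h2 = 0 → y.CY t () h1 h2 = 0 := by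
      intro t h1 h2 hp
      have h := aC t () h1 h2
      rw [show Ppt.CY t () h1 h2 = Pcy t h1 h2 from rfl, hp] at h
      have b1 := (hyC t () h1 h2).1
      have b2 := (hzC t () h1 h2).1
      linarith
    have pinCz : ∀ t h1 h2, Pcy t h1 h2 = 0 → z.CY t () h1 h2 = 0 := by
      intro t h1 h2 hp
      have h := aC t () h1 h2
      rw [show Ppt.CY t () h1 h2 = Pcy t h1 h2 from rfl, hp] at h
      have b1 := (hyC t () h1 h2).1
      have b2 := (hzC t () h1 h2).1
      linarith
    have pinBy : ∀ t g1 g2, Pcy t g1 g2 = 0 → y.B t g1 g2 = 0 := by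
      intro t g1 g2 hp
      have h := aB t g1 g2
      rw [show Ppt.B t g1 g2 = Pcy t g1 g2 from rfl, hp] at h
      have b1 := (hyB t g1 g2).1
      have b2 := (hzB t g1 g2).1
      linarith
    have pinBz : ∀ t g1 g2, Pcy t g1 g2 = 0 → z.B t g1 g2 = 0 := by
      intro t g1 g2 hp
      have h := aB t g1 g2
      rw [show Ppt.B t g1 g2 = Pcy t g1 g2 from rfl, hp] at h
      have b1 := (hyB t g1 g2).1
      have b2 := (hzB t g1 g2).1
      linarith
    have pinDy : ∀ t h g, Pdy t h g = 0 → y.DY t () h g = 0 := by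
      intro t h g hp
      have h' := aD t () h g
      rw [show Ppt.DY t () h g = Pdy t h g from rfl, hp] at h'
      have b1 := (hyD t () h g).1
      have b2 := (hzD t () h g).1
      linarith
    have pinDz : ∀ t h g, Pdy t h g = 0 → z.DY t () h g = 0 := by
      intro t h g hp
      have h' := aD t () h g
      rw [show Ppt.DY t () h g = Pdy t h g from rfl, hp] at h'
      have b1 := (hyD t () h g).1
      have b2 := (hzD t () h g).1
      linarith
    have p1 : Ppt.CY 0 () 0 0 = 1 := by norm_num [Ppt, Pcy]
    have p2 : Ppt.B 0 0 0 = 1 := by norm_num [Ppt, Pcy]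
    have p3 : Ppt.DY 0 () 0 0 = 1 := by norm_num [Ppt, Pdy]
    have oneCy : y.CY 0 () 0 0 = 1 := by
      have h := aC 0 () 0 0; rw [p1] at h
      have b1 := (hyC 0 () 0 0).2; have b2 := (hzC 0 () 0 0).2; linarith
    have oneCz : z.CY 0 () 0 0 = 1 := by
      have h := aC 0 () 0 0; rw [p1] at h
      have b1 := (hyC 0 () 0 0).2; have b2 := (hzC 0 () 0 0).2; linarith
    have oneBy : y.B 0 0 0 = 1 := by
      have h := aB 0 0 0; rw [p2] at h
      have b1 := (hyB 0 0 0).2; have b2 := (hzB 0 0 0).2; linarith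
    have oneBz : z.B 0 0 0 = 1 := by
      have h := aB 0 0 0; rw [p2] at h
      have b1 := (hyB 0 0 0).2; have b2 := (hzB 0 0 0).2; linarith
    have oneDy : y.DY 0 () 0 0 = 1 := by
      have h := aD 0 () 0 0; rw [p3] at h
      have b1 := (hyD 0 () 0 0).2; have b2 := (hzD 0 () 0 0).2; linarith
    have oneDz : z.DY 0 () 0 0 = 1 := by
      have h := aD 0 () 0 0; rw [p3] at h
      have b1 := (hyD 0 () 0 0).2; have b2 := (hzD 0 () 0 0).2; linarith
    rw [Punique y hy pinCy pinBy pinDy oneCy oneBy oneDy,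
        Punique z hz pinCz pinBz pinDz oneCz oneBz oneDz]
  · rintro ⟨hCY, -, -⟩
    rcases hCY 1 () 0 0 with h | h <;>
      rw [show Ppt.CY 1 () 0 0 = Pcy 1 0 0 from rfl] at h <;> norm_num [Pcy] at h
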